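/- Let A = [[1, 0, 0], [1/2, 1, 0], [1, −1, 1]] ∈ ℝ^{3×3}, b = (1, −1, 1)ᵀ, and e = (1,1,1)ᵀ. If R ∈ ℝ^{3×3} is symmetric with R e = b and X := R A + Aᵀ R − b bᵀ is positive semidefinite, then there exists η ∈ ℝ such that R = [[4+η, −3, −η], [−3, 4, −2], [−η, −2, 3+η]]. -/

import Mathlib

open Matrix

/-- **Reduction of the CSTW feasible set for SDIRK(3,2).**
For the SDIRK(3,2) coefficients, any symmetric `R` with `R e = b` and
`X := R A + Aᵀ R − b bᵀ ⪰ 0` lies in a one-parameter family. -/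
theorem sdirk32_feasible_set
    (A : Matrix (Fin 3) (Fin 3) ℝ)
    (hA : A = !![1, 0, 0; 1/2, 1, 0; 1, -1, 1])
    (b : Fin 3 → ℝ) (hb : b = ![1, -1, 1])
    (e : Fin 3 → ℝ) (he : e = ![1, 1, 1])
    (R : Matrix (Fin 3) (Fin 3) ℝ) (hRsymm : R.IsSymm) (hRe : R.mulVec e = b)
    (hXpsd : (R * A + Aᵀ * R - vecMulVec b b).PosSemidef) :
    ∃ η : ℝ, R = !![4 + η, -3, -η; -3, 4, -2; -η, -2, 3 + η] := by
  have hs01 : R 1 0 = R 0 1 := by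
    have := congrFun (congrFun hRsymm 0) 1; simpa [Matrix.transpose_apply] using this
  have hs02 : R 2 0 = R 0 2 := by
    have := congrFun (congrFun hRsymm 0) 2; simpa [Matrix.transpose_apply] using this
  have hs12 : R 2 1 = R 1 2 := by
    have := congrFun (congrFun hRsymm 1) 2; simpa [Matrix.transpose_apply] using this
  have hr0 : R 0 0 + R 0 1 + R 0 2 = 1 := by
    have := congrFun hRe 0
    simpa [Matrix.mulVec, dotProduct, Fin.sum_univ_three, he, hb] using this
  have hr1 : R 1 0 + R 1 1 + R 1 2 = -1 := by
    have := congrFun hRe 1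
    simpa [Matrix.mulVec, dotProduct, Fin.sum_univ_three, he, hb] using this
  have hr2 : R 2 0 + R 2 1 + R 2 2 = 1 := by
    have := congrFun hRe 2
    simpa [Matrix.mulVec, dotProduct, Fin.sum_univ_three, he, hb] using this
  have hXe : (R * A + Aᵀ * R - vecMulVec b b) *ᵥ e = 0 := by
    refine (hXpsd.dotProduct_mulVec_zero_iff e).1 ?_
    simp only [star_trivial, Matrix.mulVec, dotProduct, Matrix.sub_apply, Matrix.add_apply,
      Matrix.mul_apply, Fin.sum_univ_three, vecMulVec_apply, transpose_apply, hA, hb, he]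
    simp only [Matrix.cons_val', Matrix.cons_val_zero, Matrix.cons_val_one, Matrix.cons_val_two, Matrix.head_cons, Matrix.tail_cons, Matrix.of_apply]
    norm_num
    linarith [hs01, hs02, hs12, hr0, hr1, hr2]
  have hx0 := congrFun hXe 0
  have hx1 := congrFun hXe 1
  have hx2 := congrFun hXe 2
  simp only [Matrix.mulVec, dotProduct, Matrix.sub_apply, Matrix.add_apply,
    Matrix.mul_apply, Fin.sum_univ_three, vecMulVec_apply, transpose_apply, hA, hb, he,
    Pi.zero_apply, Matrix.cons_val_zero, Matrix.cons_val_one, Matrix.head_cons,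
    Matrix.cons_val_two, Matrix.tail_cons, Matrix.head_fin_const] at hx0 hx1 hx2
  simp only [Matrix.cons_val', Matrix.cons_val_zero, Matrix.cons_val_one, Matrix.cons_val_two, Matrix.head_cons, Matrix.tail_cons, Matrix.of_apply] at hx0 hx1 hx2
  norm_num at hx0 hx1 hx2
  refine ⟨-R 0 2, ?_⟩
  ext i j
  fin_cases i <;> fin_cases j <;> simp <;>
    linarith [hs01, hs02, hs12, hr0, hr1, hr2, hx0, hx1, hx2]
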